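/- Define f : (0, 1) → ℝ by f(x) = log((1 + √(1−x²))/x) − √(1−x²), and define ζ : (0, 1) → ℝ by ζ(x) = ((3/2) f(x))^{2/3} (real power). Then for every x ∈ (0, 1), f(x) > 0, ζ is differentiable at x with ζ(x) > 0, and the derivative satisfies (ζ'(x))² = (1 − x²)/(ζ(x)·x²). (This is the defining differential relation (dζ/dz̃)² = (1−z̃²)/(ζ z̃²) of the variable ζ in Olver's uniform asymptotic expansions of Bessel functions of large order, verified on the interval 0 < z̃ < 1.) -/

import Mathlib

open Real

private lemma fHasDeriv (t : ℝ) (h0 : 0 < t) (h1 : t < 1) :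
    HasDerivAt (fun t => Real.log ((1 + Real.sqrt (1 - t^2)) / t) - Real.sqrt (1 - t^2))
      (-(Real.sqrt (1 - t^2))/t) t := by
  have hpos : 0 < 1 - t^2 := by nlinarith
  set s := Real.sqrt (1 - t^2) with hs
  have hspos : 0 < s := Real.sqrt_pos.2 hpos
  have hs2 : s^2 = 1 - t^2 := Real.sq_sqrt hpos.le
  have hinner : HasDerivAt (fun t : ℝ => 1 - t^2) (-(2*t)) t := by
    simpa using ((hasDerivAt_pow 2 t).const_sub 1)
  have hsq : HasDerivAt (fun t => Real.sqrt (1 - t^2)) (-(2*t) / (2*s)) t :=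
    hinner.sqrt (by positivity)
  have hlog1 : HasDerivAt (fun t => Real.log (1 + Real.sqrt (1 - t^2)))
      ((-(2*t)/(2*s))/(1 + s)) t := by
    have := ((hsq.const_add 1).log (by positivity))
    simpa using this
  have hlogt : HasDerivAt Real.log t⁻¹ t := Real.hasDerivAt_log (ne_of_gt h0)
  have hcomb : HasDerivAt
      (fun t => (Real.log (1 + Real.sqrt (1 - t^2)) - Real.log t) - Real.sqrt (1 - t^2))
      (((-(2*t)/(2*s))/(1 + s) - t⁻¹) - (-(2*t)/(2*s))) t :=
    (hlog1.sub hlogt).sub hsq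
  have heq : (fun t => (Real.log (1 + Real.sqrt (1 - t^2)) - Real.log t) - Real.sqrt (1 - t^2))
      =ᶠ[nhds t] (fun t => Real.log ((1 + Real.sqrt (1 - t^2)) / t) - Real.sqrt (1 - t^2)) := by
    filter_upwards [eventually_gt_nhds h0] with y hy
    rw [Real.log_div (by positivity) (ne_of_gt hy)]
  have hval : ((-(2*t)/(2*s))/(1 + s) - t⁻¹) - (-(2*t)/(2*s)) = -s/t := by
    have h1s : 0 < 1 + s := by linarith
    field_simp
    ring_nf
    linear_combination s * hs2
  rw [hval] at hcomb
  exact hcomb.congr_of_eventuallyEq heq.symm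

theorem stmt18 (x : ℝ) (hx : 0 < x) (hx1 : x < 1) :
    let f : ℝ → ℝ := fun t => Real.log ((1 + Real.sqrt (1 - t^2)) / t) - Real.sqrt (1 - t^2)
    let ζ : ℝ → ℝ := fun t => ((3/2) * f t) ^ ((2 : ℝ)/3)
    0 < f x ∧ 0 < ζ x ∧ DifferentiableAt ℝ ζ x ∧
      (deriv ζ x)^2 = (1 - x^2) / (ζ x * x^2) := by
  intro f ζ
  have hpos : 0 < 1 - x^2 := by nlinarith
  have hspos : 0 < Real.sqrt (1 - x^2) := Real.sqrt_pos.2 hpos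
  have hs2 : (Real.sqrt (1 - x^2))^2 = 1 - x^2 := Real.sq_sqrt hpos.le
  -- f x > 0 via strict antitonicity on [x,1]
  have hfpos : 0 < f x := by
    have hcont : ContinuousOn f (Set.Icc x 1) := by
      apply ContinuousOn.sub
      · apply ContinuousOn.log
        · apply ContinuousOn.div
          · fun_prop
          · fun_prop
          · intro t ht
            exact ne_of_gt (lt_of_lt_of_le hx ht.1)
        · intro t ht
          have ht0 : 0 < t := lt_of_lt_of_le hx ht.1
          have : 0 ≤ Real.sqrt (1 - t^2) := Real.sqrt_nonneg _
          positivity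
      · fun_prop
    have hanti : StrictAntiOn f (Set.Icc x 1) := by
      apply strictAntiOn_of_deriv_neg (convex_Icc x 1) hcont
      intro t ht
      rw [interior_Icc] at ht
      have ht0 : 0 < t := lt_trans hx ht.1
      have ht1 : t < 1 := ht.2
      rw [(fHasDeriv t ht0 ht1).deriv]
      have : 0 < Real.sqrt (1 - t^2) := Real.sqrt_pos.2 (by nlinarith)
      exact div_neg_of_neg_of_pos (by linarith) ht0
    have h1 : f 1 = 0 := by
      simp [f]
    have := hanti (Set.mem_Icc.2 ⟨le_refl x, hx1.le⟩) (Set.mem_Icc.2 ⟨hx1.le, le_refl 1⟩) hx1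
    rw [h1] at this
    exact this
  have hA : 0 < (3/2 : ℝ) * f x := mul_pos (by norm_num) hfpos
  have hζpos : 0 < ζ x := Real.rpow_pos_of_pos hA _
  -- derivative of ζ
  have hfd : HasDerivAt f (-(Real.sqrt (1 - x^2))/x) x := fHasDeriv x hx hx1
  have hAd : HasDerivAt (fun t => (3/2 : ℝ) * f t) ((3/2) * (-(Real.sqrt (1 - x^2))/x)) x :=
    hfd.const_mul _
  have hζd : HasDerivAt ζ (((3/2) * (-(Real.sqrt (1 - x^2))/x)) * ((2:ℝ)/3) *
      ((3/2) * f x) ^ ((2:ℝ)/3 - 1)) x :=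
    hAd.rpow_const (Or.inl (ne_of_gt hA))
  refine ⟨hfpos, hζpos, hζd.differentiableAt, ?_⟩
  rw [hζd.deriv]
  set s := Real.sqrt (1 - x^2) with hsdef
  set A := (3/2 : ℝ) * f x with hAdef
  have hApow : (0:ℝ) < A ^ ((2:ℝ)/3) := Real.rpow_pos_of_pos hA _
  have hsq : ((3/2:ℝ) * (-s/x) * (2/3))^2 = (1-x^2)/x^2 := by
    rw [← hs2]; ring
  have hpow : (A ^ ((2:ℝ)/3 - 1))^2 = (A ^ ((2:ℝ)/3))⁻¹ := by
    rw [← Real.rpow_natCast (A ^ ((2:ℝ)/3 - 1)) 2, ← Real.rpow_mul hA.le,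
      ← Real.rpow_neg hA.le]
    norm_num
  rw [mul_pow, hsq, hpow]
  show (1-x^2)/x^2 * (A ^ ((2:ℝ)/3))⁻¹ = (1 - x^2) / (A ^ ((2:ℝ)/3) * x^2)
  field_simp
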